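/- Let ρ₁, ρ₂, ρ₃ be density matrices of the same dimension d. Then the 3×3 real symmetric matrix E₃ with entries (E₃)ᵢⱼ = √(F(ρᵢ; ρⱼ)) (so with diagonal entries 1) is positive semidefinite. -/

import Mathlib

open scoped Classical

open Matrix ComplexOrder

/-- The positive semidefinite square root of a matrix: the unique PSD square root
when the matrix is PSD, and `0` otherwise. -/
noncomputable def msqrt {n : Type*} [Fintype n] [DecidableEq n]
    (A : Matrix n n ℂ) : Matrix n n ℂ :=
  if h : A.PosSemidef then
    (h.1.eigenvectorUnitary : Matrix n n ℂ) *
      diagonal ((↑) ∘ (√·) ∘ h.1.eigenvalues) * (star h.1.eigenvectorUnitary : Matrix n n ℂ)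
  else 0

/-- Fidelity between two states: `F(ρ₁; ρ₂) = (tr √(√ρ₁ · ρ₂ · √ρ₁))²`. -/
noncomputable def fidelity {n : Type*} [Fintype n] [DecidableEq n]
    (ρ₁ ρ₂ : Matrix n n ℂ) : ℝ :=
  ((msqrt (msqrt ρ₁ * ρ₂ * msqrt ρ₁)).trace).re ^ 2

noncomputable def Matrix.PosSemidef.sqrt {n : Type*} [Fintype n] [DecidableEq n]
    {A : Matrix n n ℂ} (h : A.PosSemidef) : Matrix n n ℂ :=
  (h.1.eigenvectorUnitary : Matrix n n ℂ) *
    diagonal ((↑) ∘ (√·) ∘ h.1.eigenvalues) * (star h.1.eigenvectorUnitary : Matrix n n ℂ)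

open scoped MatrixOrder in
lemma Matrix.PosSemidef.sqrt_eq_cfcSqrt {n : Type*} [Fintype n] [DecidableEq n]
    {A : Matrix n n ℂ} (hA : A.PosSemidef) : hA.sqrt = CFC.sqrt A := by
  rw [CFC.sqrt_eq_cfc, cfc_nnreal_eq_real _ A hA.nonneg, hA.1.cfc_eq]
  simp only [IsHermitian.cfc, Matrix.PosSemidef.sqrt]
  congr 2
  ext i j
  by_cases h : i = j
  · subst h; simp [diagonal_apply, max_eq_left (hA.eigenvalues_nonneg i)]
  · simp [diagonal_apply, h]

open scoped MatrixOrder in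
lemma Matrix.PosSemidef.posSemidef_sqrt {n : Type*} [Fintype n] [DecidableEq n]
    {A : Matrix n n ℂ} (hA : A.PosSemidef) : hA.sqrt.PosSemidef := by
  rw [hA.sqrt_eq_cfcSqrt]; exact nonneg_iff_posSemidef.mp (CFC.sqrt_nonneg A)

open scoped MatrixOrder in
lemma Matrix.PosSemidef.sqrt_mul_self {n : Type*} [Fintype n] [DecidableEq n]
    {A : Matrix n n ℂ} (hA : A.PosSemidef) : hA.sqrt * hA.sqrt = A := by
  rw [hA.sqrt_eq_cfcSqrt]; exact CFC.sqrt_mul_sqrt_self A hA.nonneg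

open scoped MatrixOrder in
lemma Matrix.PosSemidef.sqrt_sq {n : Type*} [Fintype n] [DecidableEq n]
    {A : Matrix n n ℂ} (hA : A.PosSemidef) : (hA.pow 2).sqrt = A := by
  rw [(hA.pow 2).sqrt_eq_cfcSqrt]; exact CFC.sqrt_sq A hA.nonneg

set_option maxHeartbeats 1000000

section Aux

variable {n : Type*} [Fintype n] [DecidableEq n]

lemma my_svd (X : Matrix n n ℂ) :
    ∃ (E F : Matrix n n ℂ) (g : n → ℝ),
      E ∈ Matrix.unitaryGroup n ℂ ∧ F ∈ Matrix.unitaryGroup n ℂ ∧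
      (∀ i, 0 ≤ g i) ∧
      X = F * Matrix.diagonal (fun i => (g i : ℂ)) * Eᴴ ∧
      (Matrix.posSemidef_conjTranspose_mul_self X).sqrt
        = E * Matrix.diagonal (fun i => (g i : ℂ)) * Eᴴ := by
  have hP := Matrix.posSemidef_conjTranspose_mul_self X
  have hH : (Xᴴ * X).IsHermitian := hP.1
  set e := hH.eigenvectorBasis with he
  set μ := hH.eigenvalues with hμdef
  have hμ : ∀ i, 0 ≤ μ i := fun i => hP.eigenvalues_nonneg i
  set g : n → ℝ := fun i => Real.sqrt (μ i) with hg
  have hinner : ∀ i j, dotProduct (star (X *ᵥ ⇑(e i))) (X *ᵥ ⇑(e j))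
      = if i = j then (μ j : ℂ) else 0 := by
    intro i j
    rw [Matrix.star_mulVec, Matrix.dotProduct_mulVec, Matrix.vecMul_vecMul,
        ← Matrix.dotProduct_mulVec, hH.mulVec_eigenvectorBasis j,
        RCLike.real_smul_eq_coe_smul (K := ℂ), dotProduct_smul]
    have horth := orthonormal_iff_ite.mp e.orthonormal i j
    rw [EuclideanSpace.inner_eq_star_dotProduct, dotProduct_comm] at horth
    rw [horth]
    simp [mul_comm]; rfl
  -- the candidate left singular vectors
  set v : n → EuclideanSpace ℂ n :=
    fun i => ((g i : ℂ))⁻¹ • ((WithLp.equiv 2 (n → ℂ)).symm (X *ᵥ ⇑(e i))) with hv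
  set s : Set n := {i | μ i ≠ 0} with hs
  have hgpos : ∀ i ∈ s, 0 < g i := fun i hi =>
    Real.sqrt_pos.mpr (lt_of_le_of_ne (hμ i) (Ne.symm hi))
  have hortho : Orthonormal ℂ (s.restrict v) := by
    rw [orthonormal_iff_ite]
    intro ⟨i, hi⟩ ⟨j, hj⟩
    change inner ℂ (v i) (v j) = _
    rw [hv]
    simp only [inner_smul_left, inner_smul_right]
    rw [show inner ℂ ((WithLp.equiv 2 (n → ℂ)).symm (X *ᵥ ⇑(e i))) ((WithLp.equiv 2 (n → ℂ)).symm (X *ᵥ ⇑(e j))) = dotProduct (star (X *ᵥ ⇑(e i))) (X *ᵥ ⇑(e j)) from dotProduct_comm _ _, hinner i j]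
    by_cases hij : i = j
    · subst hij
      simp only [if_pos rfl, Subtype.mk.injEq]
      have : (Real.sqrt (μ i) : ℂ) * Real.sqrt (μ i) = (μ i : ℂ) := by
        rw [← Complex.ofReal_mul, Real.mul_self_sqrt (hμ i)]
      field_simp [g]
      have hg2 : (g i : ℂ) * g i = μ i := this
      have hgne : (g i : ℂ) ≠ 0 := Complex.ofReal_ne_zero.mpr (hgpos i hi).ne'
      simp only [ite_true, one_div, map_inv₀, Complex.conj_ofReal]
      rw [← hg2]; field_simp
    · simp [hij, Subtype.mk.injEq]
  obtain ⟨f, hf⟩ := hortho.exists_orthonormalBasis_extension_of_card_eq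
    (finrank_euclideanSpace (𝕜 := ℂ) (ι := n))
  set E : Matrix n n ℂ := (Matrix.IsHermitian.eigenvectorUnitary hH : Matrix n n ℂ) with hE
  have hEmem : E ∈ Matrix.unitaryGroup n ℂ := (Matrix.IsHermitian.eigenvectorUnitary hH).2
  set F : Matrix n n ℂ := (EuclideanSpace.basisFun n ℂ).toBasis.toMatrix f.toBasis with hF
  have hFmem : F ∈ Matrix.unitaryGroup n ℂ :=
    (EuclideanSpace.basisFun n ℂ).toMatrix_orthonormalBasis_mem_unitary f
  have hFapply : ∀ i j, F i j = f j i := fun i j => rfl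
  have hEapply : ∀ i j, E i j = e j i := fun i j => rfl
  -- columns identity
  have hcol : ∀ j, X *ᵥ ⇑(e j) = fun i => (g j : ℂ) * f j i := by
    intro j
    by_cases hj : μ j = 0
    · have hz : dotProduct (star (X *ᵥ ⇑(e j))) (X *ᵥ ⇑(e j)) = 0 := by
        rw [hinner j j]; simp [hj]
      have hzero : X *ᵥ ⇑(e j) = 0 := by
        funext k
        have hre := congrArg Complex.re hz
        rw [dotProduct] at hre
        simp only [Pi.star_apply, Complex.re_sum] at hre
        have : ∀ l, ((star ((X *ᵥ ⇑(e j)) l)) * ((X *ᵥ ⇑(e j)) l)).re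
            = Complex.normSq ((X *ᵥ ⇑(e j)) l) := by
          intro l
          simp [Complex.star_def, ← Complex.normSq_eq_conj_mul_self]
        rw [Finset.sum_congr rfl (fun l _ => this l)] at hre
        have hk := (Finset.sum_eq_zero_iff_of_nonneg
          (fun l _ => Complex.normSq_nonneg _)).mp hre k (Finset.mem_univ k)
        simpa using Complex.normSq_eq_zero.mp hk
      rw [hzero]
      have : g j = 0 := by simp [hg, hj]
      funext i; simp [this]
    · have hjs : j ∈ s := hj
      have hfj : f j = v j := hf j hjs
      funext i
      have happ : f j i = ((g j:ℂ))⁻¹ * (X *ᵥ ⇑(e j)) i := by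
        rw [hfj]; rfl
      rw [happ]
      have hgne : (g j : ℂ) ≠ 0 := by
        simpa using (hgpos j hjs).ne'
      field_simp
  -- main identities
  refine ⟨E, F, g, hEmem, hFmem, fun i => Real.sqrt_nonneg _, ?_, ?_⟩
  · have hXE : X * E = F * Matrix.diagonal (fun i => (g i : ℂ)) := by
      ext i j
      have h1 : (X * E) i j = (X *ᵥ ⇑(e j)) i := rfl
      rw [h1, hcol j]
      rw [Matrix.mul_apply]
      rw [Finset.sum_eq_single j]
      · rw [hFapply, Matrix.diagonal_apply_eq]; ring
      · intro k _ hk; rw [Matrix.diagonal_apply_ne _ hk, mul_zero]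
      · intro h; exact absurd (Finset.mem_univ j) h
    have hEE : E * Eᴴ = 1 := by
      rw [← Matrix.star_eq_conjTranspose]
      exact (Matrix.mem_unitaryGroup_iff.mp hEmem)
    calc X = X * (E * Eᴴ) := by rw [hEE, mul_one]
    _ = (X * E) * Eᴴ := by rw [mul_assoc]
    _ = F * Matrix.diagonal (fun i => (g i : ℂ)) * Eᴴ := by rw [hXE]
  · rfl

noncomputable def tnorm (X : Matrix n n ℂ) : ℝ :=
  ((Matrix.posSemidef_conjTranspose_mul_self X).sqrt.trace).re


lemma tn_facts (X : Matrix n n ℂ) :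
    0 ≤ tnorm X ∧
    ((Matrix.posSemidef_conjTranspose_mul_self X).sqrt.trace = (tnorm X : ℂ)) ∧
    (∃ U ∈ Matrix.unitaryGroup n ℂ, (U * X).trace = (tnorm X : ℂ)) ∧
    (∀ V, V ∈ Matrix.unitaryGroup n ℂ → ‖(V * X).trace‖ ≤ tnorm X) := by
  obtain ⟨E, F, g, hE, hF, hg, hX, hsqrt⟩ := my_svd X
  have hEE' : Eᴴ * E = 1 := by
    rw [← Matrix.star_eq_conjTranspose]; exact Matrix.mem_unitaryGroup_iff'.mp hE
  have hFF' : Fᴴ * F = 1 := by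
    rw [← Matrix.star_eq_conjTranspose]; exact Matrix.mem_unitaryGroup_iff'.mp hF
  set D : Matrix n n ℂ := Matrix.diagonal (fun i => (g i : ℂ)) with hD
  have htr : (Matrix.posSemidef_conjTranspose_mul_self X).sqrt.trace = ((∑ i, g i : ℝ) : ℂ) := by
    rw [hsqrt, Matrix.trace_mul_cycle, hEE', one_mul, Matrix.trace_diagonal]
    push_cast; rfl
  have htn : tnorm X = ∑ i, g i := by
    rw [tnorm, htr, Complex.ofReal_re]
  have h0 : 0 ≤ tnorm X := htn ▸ Finset.sum_nonneg (fun i _ => hg i)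
  refine ⟨h0, by rw [htr, htn], ?_, ?_⟩
  · refine ⟨E * Fᴴ, mul_mem hE (Unitary.star_mem hF), ?_⟩
    have : E * Fᴴ * X = E * D * Eᴴ := by
      rw [hX]
      calc E * Fᴴ * (F * D * Eᴴ) = E * ((Fᴴ * F) * (D * Eᴴ)) := by
            simp only [mul_assoc]
      _ = E * D * Eᴴ := by rw [hFF', one_mul, mul_assoc]
    rw [this, ← hsqrt, htr, htn]
  · intro V hV
    set G : Matrix n n ℂ := Eᴴ * (V * F) with hG
    have hGmem : G ∈ Matrix.unitaryGroup n ℂ := by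
      rw [hG, ← Matrix.star_eq_conjTranspose]
      exact mul_mem (Unitary.star_mem hE) (mul_mem hV hF)
    have htrace : (V * X).trace = (G * D).trace := by
      rw [hX, hG]
      rw [show V * (F * D * Eᴴ) = (V * F * D) * Eᴴ by simp only [mul_assoc],
        Matrix.trace_mul_comm]
      congr 1
      simp only [mul_assoc]
    have hGD : (G * D).trace = ∑ i, G i i * (g i : ℂ) := by
      rw [Matrix.trace]
      exact Finset.sum_congr rfl (fun i _ => by
        rw [Matrix.diag_apply, Matrix.mul_diagonal])
    have hGbound : ∀ i, ‖G i i‖ ≤ 1 := by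
      intro i
      have h1 : (star G * G) = 1 := Matrix.mem_unitaryGroup_iff'.mp hGmem
      have h2 : (star G * G) i i = 1 := by rw [h1]; simp
      rw [Matrix.mul_apply] at h2
      have h3 := congrArg Complex.re h2
      simp only [Complex.re_sum] at h3
      have h4 : ∀ k, ((star G) i k * G k i).re = Complex.normSq (G k i) := by
        intro k
        rw [Matrix.star_apply, Complex.star_def, ← Complex.normSq_eq_conj_mul_self]
        simp
      rw [Finset.sum_congr rfl (fun k _ => h4 k)] at h3
      have h5 : Complex.normSq (G i i) ≤ 1 := by
        rw [show (1:ℂ).re = (1:ℝ) by simp] at h3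
        rw [← h3]
        exact Finset.single_le_sum (f := fun k => Complex.normSq (G k i))
          (fun k _ => Complex.normSq_nonneg _) (Finset.mem_univ i)
      have h6 : ‖G i i‖ ^ 2 ≤ 1 := by rwa [Complex.sq_norm]
      nlinarith [norm_nonneg (G i i)]
    rw [htrace, hGD, htn]
    calc ‖∑ i, G i i * (g i : ℂ)‖ ≤ ∑ i, ‖G i i * (g i : ℂ)‖ :=
          norm_sum_le _ _
    _ ≤ ∑ i, g i := by
        apply Finset.sum_le_sum
        intro i _
        rw [norm_mul, Complex.norm_real, Real.norm_eq_abs, abs_of_nonneg (hg i)]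
        calc ‖G i i‖ * g i ≤ 1 * g i :=
              mul_le_mul_of_nonneg_right (hGbound i) (hg i)
        _ = g i := one_mul _

noncomputable def rf (ρ σ : Matrix n n ℂ) : ℝ :=
  ((msqrt (msqrt ρ * σ * msqrt ρ)).trace).re

lemma sqrt_congr {A B : Matrix n n ℂ} (hA : A.PosSemidef) (hB : B.PosSemidef)
    (h : A = B) : hA.sqrt = hB.sqrt := by subst h; rfl

lemma msqrt_of_psd {A : Matrix n n ℂ} (hA : A.PosSemidef) : msqrt A = hA.sqrt := by
  rw [msqrt, dif_pos hA]; rfl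

lemma conjTranspose_mul_self_eq {ρ σ : Matrix n n ℂ} (hρ : ρ.PosSemidef) (hσ : σ.PosSemidef) :
    (msqrt σ * msqrt ρ)ᴴ * (msqrt σ * msqrt ρ) = msqrt ρ * σ * msqrt ρ := by
  rw [msqrt_of_psd hρ, msqrt_of_psd hσ, conjTranspose_mul,
      hρ.posSemidef_sqrt.1.eq, hσ.posSemidef_sqrt.1.eq]
  calc hρ.sqrt * hσ.sqrt * (hσ.sqrt * hρ.sqrt)
      = hρ.sqrt * (hσ.sqrt * hσ.sqrt) * hρ.sqrt := by simp only [mul_assoc]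
    _ = hρ.sqrt * σ * hρ.sqrt := by rw [hσ.sqrt_mul_self]

lemma rf_eq_tnorm {ρ σ : Matrix n n ℂ} (hρ : ρ.PosSemidef) (hσ : σ.PosSemidef) :
    rf ρ σ = tnorm (msqrt σ * msqrt ρ) := by
  have hXX := conjTranspose_mul_self_eq hρ hσ
  have h1 : (msqrt ρ * σ * msqrt ρ).PosSemidef :=
    hXX ▸ Matrix.posSemidef_conjTranspose_mul_self (msqrt σ * msqrt ρ)
  rw [rf, tnorm, msqrt_of_psd h1,
      sqrt_congr h1 (Matrix.posSemidef_conjTranspose_mul_self _) hXX.symm]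

lemma rf_nonneg {ρ σ : Matrix n n ℂ} (hρ : ρ.PosSemidef) (hσ : σ.PosSemidef) :
    0 ≤ rf ρ σ := by
  rw [rf_eq_tnorm hρ hσ]; exact (tn_facts _).1

lemma tnorm_conjTranspose (X : Matrix n n ℂ) : tnorm Xᴴ = tnorm X := by
  have le : ∀ Y : Matrix n n ℂ, tnorm Y ≤ tnorm Yᴴ := by
    intro Y
    obtain ⟨h0, -, ⟨U, hU, hUtr⟩, -⟩ := tn_facts Y
    obtain ⟨-, -, -, hbound⟩ := tn_facts Yᴴ
    have h2 : (star ((star U * Yᴴ).trace)) = (U * Y).trace := by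
      rw [← Matrix.trace_conjTranspose, conjTranspose_mul, conjTranspose_conjTranspose,
          ← Matrix.star_eq_conjTranspose (star U), star_star, Matrix.trace_mul_comm]
    have h3 : ‖(star U * Yᴴ).trace‖ = tnorm Y := by
      calc ‖(star U * Yᴴ).trace‖
          = ‖star ((star U * Yᴴ).trace)‖ := by
            rw [Complex.star_def, Complex.norm_conj]
        _ = ‖(U * Y).trace‖ := by rw [h2]
        _ = tnorm Y := by rw [hUtr, Complex.norm_real, Real.norm_eq_abs, abs_of_nonneg h0]
    calc tnorm Y = ‖(star U * Yᴴ).trace‖ := h3.symm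
      _ ≤ tnorm Yᴴ := hbound _ (Unitary.star_mem hU)
  exact le_antisymm (by simpa using le Xᴴ) (le X)

lemma rf_symm {ρ σ : Matrix n n ℂ} (hρ : ρ.PosSemidef) (hσ : σ.PosSemidef) :
    rf ρ σ = rf σ ρ := by
  rw [rf_eq_tnorm hρ hσ, rf_eq_tnorm hσ hρ]
  have : (msqrt σ * msqrt ρ)ᴴ = msqrt ρ * msqrt σ := by
    rw [msqrt_of_psd hρ, msqrt_of_psd hσ, conjTranspose_mul,
        hρ.posSemidef_sqrt.1.eq, hσ.posSemidef_sqrt.1.eq]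
  rw [← this, tnorm_conjTranspose]

lemma rf_self {ρ : Matrix n n ℂ} (hρ : ρ.PosSemidef) (htr : ρ.trace = 1) :
    rf ρ ρ = 1 := by
  have h2 : msqrt ρ * ρ * msqrt ρ = ρ ^ 2 := by
    rw [msqrt_of_psd hρ]
    calc hρ.sqrt * ρ * hρ.sqrt
        = hρ.sqrt * (hρ.sqrt * hρ.sqrt) * hρ.sqrt := by rw [hρ.sqrt_mul_self]
      _ = (hρ.sqrt * hρ.sqrt) * (hρ.sqrt * hρ.sqrt) := by simp only [mul_assoc]
      _ = ρ ^ 2 := by rw [hρ.sqrt_mul_self, sq]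
  have hp2 : (ρ ^ 2).PosSemidef := hρ.pow 2
  rw [rf, h2, msqrt_of_psd hp2, sqrt_congr hp2 (hρ.pow 2) rfl, hρ.sqrt_sq, htr]
  simp

lemma re_trace_nonneg (N : Matrix n n ℂ) : 0 ≤ ((Nᴴ * N).trace).re := by
  rw [Matrix.trace]
  simp only [Complex.re_sum, Matrix.diag_apply, Matrix.mul_apply, Matrix.conjTranspose_apply]
  apply Finset.sum_nonneg
  intro i _
  apply Finset.sum_nonneg
  intro k _
  have : (star (N k i) * N k i).re = Complex.normSq (N k i) := by
    simp [Complex.star_def, ← Complex.normSq_eq_conj_mul_self]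
  rw [this]
  exact Complex.normSq_nonneg _

lemma pivot {ρ₁ ρ₂ ρ₃ : Matrix n n ℂ}
    (h1 : ρ₁.PosSemidef) (h2 : ρ₂.PosSemidef) (h3 : ρ₃.PosSemidef)
    (t1 : ρ₁.trace = 1) (t2 : ρ₂.trace = 1) (t3 : ρ₃.trace = 1) :
    rf ρ₂ ρ₁ ≤ 1 ∧ rf ρ₂ ρ₃ ≤ 1 ∧
    rf ρ₂ ρ₁ * rf ρ₂ ρ₃ ≤ rf ρ₃ ρ₁ +
      Real.sqrt ((1 - rf ρ₂ ρ₁ ^ 2) * (1 - rf ρ₂ ρ₃ ^ 2)) := by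
  set B₁ := msqrt ρ₁ with hB1def
  set B₂ := msqrt ρ₂ with hB2def
  set B₃ := msqrt ρ₃ with hB3def
  have hB1H : B₁ᴴ = B₁ := by rw [hB1def, msqrt_of_psd h1]; exact h1.posSemidef_sqrt.1
  have hB2H : B₂ᴴ = B₂ := by rw [hB2def, msqrt_of_psd h2]; exact h2.posSemidef_sqrt.1
  have hB3H : B₃ᴴ = B₃ := by rw [hB3def, msqrt_of_psd h3]; exact h3.posSemidef_sqrt.1
  have hB1sq : B₁ * B₁ = ρ₁ := by rw [hB1def, msqrt_of_psd h1]; exact h1.sqrt_mul_self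
  have hB2sq : B₂ * B₂ = ρ₂ := by rw [hB2def, msqrt_of_psd h2]; exact h2.sqrt_mul_self
  have hB3sq : B₃ * B₃ = ρ₃ := by rw [hB3def, msqrt_of_psd h3]; exact h3.sqrt_mul_self
  set a := rf ρ₂ ρ₁ with hadef
  set c := rf ρ₂ ρ₃ with hcdef
  set b := rf ρ₃ ρ₁ with hbdef
  have ha : a = tnorm (B₁ * B₂) := rf_eq_tnorm h2 h1
  have hc : c = tnorm (B₃ * B₂) := rf_eq_tnorm h2 h3
  have hb : b = tnorm (B₁ * B₃) := rf_eq_tnorm h3 h1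
  obtain ⟨-, -, ⟨U₁, hU₁, hU₁tr⟩, -⟩ := tn_facts (B₁ * B₂)
  obtain ⟨-, -, ⟨U₃, hU₃, hU₃tr⟩, -⟩ := tn_facts (B₃ * B₂)
  obtain ⟨-, -, -, hbound⟩ := tn_facts (B₁ * B₃)
  have hU₁inv : U₁ᴴ * U₁ = 1 := by
    rw [← Matrix.star_eq_conjTranspose]; exact Matrix.mem_unitaryGroup_iff'.mp hU₁
  have hU₃inv : U₃ᴴ * U₃ = 1 := by
    rw [← Matrix.star_eq_conjTranspose]; exact Matrix.mem_unitaryGroup_iff'.mp hU₃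
  set z : ℂ := ((U₃ᴴ * U₁) * (B₁ * B₃)).trace with hzdef
  have hzb : ‖z‖ ≤ b := by
    rw [hb]
    apply hbound
    rw [← Matrix.star_eq_conjTranspose]
    exact mul_mem (Unitary.star_mem hU₃) hU₁
  -- the three vectors
  set A₁ : Matrix n n ℂ := B₁ * U₁ᴴ with hA1def
  set A₃ : Matrix n n ℂ := B₃ * U₃ᴴ with hA3def
  have hA1H : A₁ᴴ = U₁ * B₁ := by
    rw [hA1def, conjTranspose_mul, conjTranspose_conjTranspose, hB1H]
  have hA3H : A₃ᴴ = U₃ * B₃ := by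
    rw [hA3def, conjTranspose_mul, conjTranspose_conjTranspose, hB3H]
  -- diagonal entries
  have hT11 : (A₁ᴴ * A₁).trace = 1 := by
    calc (A₁ᴴ * A₁).trace = (U₁ * (B₁ * (B₁ * U₁ᴴ))).trace := by
          rw [hA1H, hA1def]; simp only [mul_assoc]
      _ = ((B₁ * (B₁ * U₁ᴴ)) * U₁).trace := Matrix.trace_mul_comm _ _
      _ = ρ₁.trace := by
          simp only [mul_assoc, hU₁inv, mul_one]; rw [hB1sq]
      _ = 1 := t1
  have hT22 : (B₂ᴴ * B₂).trace = 1 := by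
    rw [hB2H, hB2sq, t2]
  have hT33 : (A₃ᴴ * A₃).trace = 1 := by
    calc (A₃ᴴ * A₃).trace = (U₃ * (B₃ * (B₃ * U₃ᴴ))).trace := by
          rw [hA3H, hA3def]; simp only [mul_assoc]
      _ = ((B₃ * (B₃ * U₃ᴴ)) * U₃).trace := Matrix.trace_mul_comm _ _
      _ = ρ₃.trace := by
          simp only [mul_assoc, hU₃inv, mul_one]; rw [hB3sq]
      _ = 1 := t3
  -- off-diagonal entries
  have hT12 : (A₁ᴴ * B₂).trace = (a : ℂ) := by
    rw [hA1H, mul_assoc, ha]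
    exact hU₁tr
  have hT32 : (A₃ᴴ * B₂).trace = (c : ℂ) := by
    rw [hA3H, mul_assoc, hc]
    exact hU₃tr
  have hT13 : (A₁ᴴ * A₃).trace = z := by
    calc (A₁ᴴ * A₃).trace = ((U₁ * (B₁ * B₃)) * U₃ᴴ).trace := by
          rw [hA1H, hA3def]; simp only [mul_assoc]
      _ = (U₃ᴴ * (U₁ * (B₁ * B₃))).trace := Matrix.trace_mul_comm _ _
      _ = z := by rw [hzdef]; simp only [mul_assoc]
  have hTswap : ∀ (P Q : Matrix n n ℂ), (Qᴴ * P).trace = star ((Pᴴ * Q).trace) := by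
    intro P Q
    rw [← Matrix.trace_conjTranspose, conjTranspose_mul, conjTranspose_conjTranspose]
  have hT21 : (B₂ᴴ * A₁).trace = (a : ℂ) := by
    rw [hTswap, hT12, Complex.star_def, Complex.conj_ofReal]
  have hT23 : (B₂ᴴ * A₃).trace = (c : ℂ) := by
    rw [hTswap, hT32, Complex.star_def, Complex.conj_ofReal]
  have hT31 : (A₃ᴴ * A₁).trace = star z := by
    rw [hTswap, hT13]
  -- the quadratic form
  set r := z.re with hrdef
  have hform : ∀ x y w : ℝ,
      0 ≤ x^2 + y^2 + w^2 + 2*a*(x*y) + 2*c*(y*w) + 2*r*(x*w) := by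
    intro x y w
    set N : Matrix n n ℂ := (x:ℂ) • A₁ + (y:ℂ) • B₂ + (w:ℂ) • A₃ with hNdef
    have h0 := re_trace_nonneg N
    have hNH : Nᴴ = (x:ℂ) • A₁ᴴ + (y:ℂ) • B₂ᴴ + (w:ℂ) • A₃ᴴ := by
      rw [hNdef]
      simp [conjTranspose_add, conjTranspose_smul, Complex.star_def, Complex.conj_ofReal]
    have hexp : (Nᴴ * N).trace
        = (x:ℂ)*x*(A₁ᴴ*A₁).trace + x*y*(A₁ᴴ*B₂).trace + x*w*(A₁ᴴ*A₃).trace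
        + y*x*(B₂ᴴ*A₁).trace + y*y*(B₂ᴴ*B₂).trace + y*w*(B₂ᴴ*A₃).trace
        + w*x*(A₃ᴴ*A₁).trace + w*y*(A₃ᴴ*B₂).trace + w*w*(A₃ᴴ*A₃).trace := by
      rw [hNdef, hNH]
      simp only [Matrix.add_mul, Matrix.mul_add, smul_mul_assoc,
        mul_smul_comm, smul_smul, Matrix.trace_add, Matrix.trace_smul, smul_eq_mul]
      ring
    rw [hT11, hT22, hT33, hT12, hT21, hT13, hT31, hT23, hT32] at hexp
    have hre : ((Nᴴ * N).trace).re
        = x^2 + y^2 + w^2 + 2*a*(x*y) + 2*c*(y*w) + 2*r*(x*w) := by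
      rw [hexp]
      simp [Complex.add_re, Complex.mul_re, Complex.ofReal_re, Complex.ofReal_im,
        Complex.conj_re, Complex.conj_im, Complex.star_def]
      ring
    rw [hre] at h0
    linarith
  -- extract conclusions
  have hr_le : r ≤ b := le_trans (Complex.re_le_norm z) hzb
  have ha1 : a ≤ 1 := by have := hform 1 (-1) 0; nlinarith
  have hc1 : c ≤ 1 := by have := hform 0 1 (-1); nlinarith
  refine ⟨ha1, hc1, ?_⟩
  have hquad : ∀ t : ℝ, 0 ≤ (1 - a^2) * (t*t) + (2*(r - a*c))*t + (1 - c^2) := by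
    intro t
    have h := hform t (-(a*t+c)) 1
    nlinarith [h]
  have hdisc := discrim_le_zero hquad
  rw [discrim] at hdisc
  have h4 : (a*c - r)^2 ≤ (1-a^2)*(1-c^2) := by nlinarith
  have h5 : a*c - r ≤ Real.sqrt ((1-a^2)*(1-c^2)) := by
    rcases le_or_gt (a*c - r) 0 with h | h
    · linarith [Real.sqrt_nonneg ((1-a^2)*(1-c^2))]
    · have := Real.sqrt_le_sqrt h4
      rwa [Real.sqrt_sq h.le] at this
  linarith

lemma key_det (a b c : ℝ) (ha0 : 0 ≤ a) (hb0 : 0 ≤ b) (hc0 : 0 ≤ c)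
    (ha1 : a ≤ 1) (hb1 : b ≤ 1) (hc1 : c ≤ 1)
    (h1 : a*c ≤ b + Real.sqrt ((1-a^2)*(1-c^2)))
    (h2 : a*b ≤ c + Real.sqrt ((1-a^2)*(1-b^2)))
    (h3 : b*c ≤ a + Real.sqrt ((1-b^2)*(1-c^2))) :
    0 ≤ 1 + 2*a*b*c - a^2 - b^2 - c^2 := by
  obtain ⟨p, hp0, hp2⟩ : ∃ p : ℝ, 0 ≤ p ∧ p^2 = 1-a^2 :=
    ⟨Real.sqrt (1-a^2), Real.sqrt_nonneg _, Real.sq_sqrt (by nlinarith)⟩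
  obtain ⟨q, hq0, hq2⟩ : ∃ q : ℝ, 0 ≤ q ∧ q^2 = 1-b^2 :=
    ⟨Real.sqrt (1-b^2), Real.sqrt_nonneg _, Real.sq_sqrt (by nlinarith)⟩
  obtain ⟨s, hs0, hs2⟩ : ∃ s : ℝ, 0 ≤ s ∧ s^2 = 1-c^2 :=
    ⟨Real.sqrt (1-c^2), Real.sqrt_nonneg _, Real.sq_sqrt (by nlinarith)⟩
  have hps : Real.sqrt ((1-a^2)*(1-c^2)) = p*s := by
    rw [show (1-a^2)*(1-c^2) = (p*s)^2 by rw [← hp2, ← hs2]; ring]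
    exact Real.sqrt_sq (mul_nonneg hp0 hs0)
  have hpq : Real.sqrt ((1-a^2)*(1-b^2)) = p*q := by
    rw [show (1-a^2)*(1-b^2) = (p*q)^2 by rw [← hp2, ← hq2]; ring]
    exact Real.sqrt_sq (mul_nonneg hp0 hq0)
  have hqs : Real.sqrt ((1-b^2)*(1-c^2)) = q*s := by
    rw [show (1-b^2)*(1-c^2) = (q*s)^2 by rw [← hq2, ← hs2]; ring]
    exact Real.sqrt_sq (mul_nonneg hq0 hs0)
  rw [hps] at h1
  rw [hpq] at h2
  rw [hqs] at h3
  clear hps hpq hqs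
  have hmain : b ≤ a*c + p*s := by
    by_contra hcon
    push_neg at hcon
    have hacps : 0 ≤ a*c + p*s := by positivity
    have hbb : (a*c + p*s)^2 < b^2 := by nlinarith
    have hid : (a*s - p*c)^2 + (a*c + p*s)^2 = 1 := by
      linear_combination (c^2 + s^2) * hp2 + hs2
    have hsq : q^2 < (a*s - p*c)^2 := by linarith
    rcases le_or_gt (p*c) (a*s) with hcase | hcase
    · have hqlt : q < a*s - p*c := by nlinarith
      rcases eq_or_lt_of_le hp0 with hp | hp
      · have hp' : p = 0 := hp.symm
        have hpa : a = 1 := by nlinarith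
        have e1 : p*q = 0 := by rw [hp', zero_mul]
        have e2 : p*s = 0 := by rw [hp', zero_mul]
        rw [e1] at h2
        rw [e2] at hcon
        nlinarith
      · have e1 : p*q < p*(a*s - p*c) := mul_lt_mul_of_pos_left hqlt hp
        have e3 : p^2*c = c - a^2*c := by rw [hp2]; ring
        have e4 : a*(a*c+p*s) ≤ a*b := mul_le_mul_of_nonneg_left hcon.le ha0
        nlinarith
    · have hqlt : q < p*c - a*s := by nlinarith
      rcases eq_or_lt_of_le hs0 with hs | hs
      · have hs' : s = 0 := hs.symm
        have hsc : c = 1 := by nlinarith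
        have e1 : q*s = 0 := by rw [hs', mul_zero]
        have e2 : p*s = 0 := by rw [hs', mul_zero]
        rw [e1] at h3
        rw [e2] at hcon
        nlinarith
      · have e1 : q*s < (p*c - a*s)*s := mul_lt_mul_of_pos_right hqlt hs
        have e3 : s^2*a = a - c^2*a := by rw [hs2]; ring
        have e4 : c*(a*c+p*s) ≤ c*b := mul_le_mul_of_nonneg_left hcon.le hc0
        nlinarith
  have f1 : 0 ≤ p*s - (b - a*c) := by linarith
  have f2 : 0 ≤ p*s + (b - a*c) := by linarith
  have e : p^2*s^2 = (1-a^2)*(1-c^2) := by rw [hp2, hs2]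
  nlinarith [mul_nonneg f1 f2, e]

lemma quad_nonneg (a b c x0 x1 x2 : ℝ) (ha0 : 0 ≤ a) (hb0 : 0 ≤ b) (hc0 : 0 ≤ c)
    (ha1 : a ≤ 1) (hb1 : b ≤ 1) (hc1 : c ≤ 1)
    (hdet : 0 ≤ 1 + 2*a*b*c - a^2 - b^2 - c^2) :
    0 ≤ x0^2 + x1^2 + x2^2 + 2*a*(x0*x1) + 2*b*(x0*x2) + 2*c*(x1*x2) := by
  rcases eq_or_lt_of_le ha1 with ha | ha
  · subst ha
    have hbc : b = c := by nlinarith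
    subst hbc
    nlinarith [sq_nonneg (x0 + x1 + b*x2),
      mul_nonneg (by nlinarith : (0:ℝ) ≤ 1 - b^2) (sq_nonneg x2)]
  · have h1a : 0 < 1 - a^2 := by nlinarith
    nlinarith [mul_nonneg h1a.le (sq_nonneg (x0 + a*x1 + b*x2)),
      sq_nonneg ((1-a^2)*x1 + (c - a*b)*x2),
      mul_nonneg hdet (sq_nonneg x2), h1a]

end Aux

/-- For any three density matrices, the 3×3 matrix of root fidelities
`(E₃)ᵢⱼ = √F(ρᵢ; ρⱼ)` is positive semidefinite. -/
theorem rootFidelity_matrix_three_posSemidef {d : ℕ}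
    (ρ : Fin 3 → Matrix (Fin d) (Fin d) ℂ)
    (hpsd : ∀ i, (ρ i).PosSemidef) (htr : ∀ i, (ρ i).trace = 1) :
    (Matrix.of fun i j : Fin 3 =>
      Real.sqrt (fidelity (ρ i) (ρ j))).PosSemidef := by
  have hfid : ∀ i j, Real.sqrt (fidelity (ρ i) (ρ j)) = rf (ρ i) (ρ j) := by
    intro i j
    rw [show fidelity (ρ i) (ρ j) = rf (ρ i) (ρ j) ^ 2 from rfl,
      Real.sqrt_sq (rf_nonneg (hpsd i) (hpsd j))]
  set a := rf (ρ 0) (ρ 1) with hadef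
  set b := rf (ρ 0) (ρ 2) with hbdef
  set c := rf (ρ 1) (ρ 2) with hcdef
  have s10 : rf (ρ 1) (ρ 0) = a := rf_symm (hpsd 1) (hpsd 0)
  have s20 : rf (ρ 2) (ρ 0) = b := rf_symm (hpsd 2) (hpsd 0)
  have s21 : rf (ρ 2) (ρ 1) = c := rf_symm (hpsd 2) (hpsd 1)
  have ha0 : 0 ≤ a := rf_nonneg (hpsd 0) (hpsd 1)
  have hb0 : 0 ≤ b := rf_nonneg (hpsd 0) (hpsd 2)
  have hc0 : 0 ≤ c := rf_nonneg (hpsd 1) (hpsd 2)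
  obtain ⟨P1a, P1c, P1⟩ := pivot (hpsd 0) (hpsd 1) (hpsd 2) (htr 0) (htr 1) (htr 2)
  obtain ⟨P2a, P2b, P2⟩ := pivot (hpsd 1) (hpsd 0) (hpsd 2) (htr 1) (htr 0) (htr 2)
  obtain ⟨-, -, P3⟩ := pivot (hpsd 0) (hpsd 2) (hpsd 1) (htr 0) (htr 2) (htr 1)
  rw [s10] at P1a P1
  rw [s20] at P3
  rw [s10] at P3
  rw [s21] at P2 P3
  -- P1 : a * rf (ρ 1) (ρ 2) ≤ rf (ρ 2) (ρ 0) + √((1-a²)(1-c²))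
  rw [s20] at P1
  have ha1 : a ≤ 1 := P1a
  have hc1 : c ≤ 1 := P1c
  have hb1 : b ≤ 1 := P2b
  have hdet : 0 ≤ 1 + 2*a*b*c - a^2 - b^2 - c^2 :=
    key_det a b c ha0 hb0 hc0 ha1 hb1 hc1 P1 P2 P3
  have e00 : Real.sqrt (fidelity (ρ 0) (ρ 0)) = 1 := by
    rw [hfid]; exact rf_self (hpsd 0) (htr 0)
  have e11 : Real.sqrt (fidelity (ρ 1) (ρ 1)) = 1 := by
    rw [hfid]; exact rf_self (hpsd 1) (htr 1)
  have e22 : Real.sqrt (fidelity (ρ 2) (ρ 2)) = 1 := by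
    rw [hfid]; exact rf_self (hpsd 2) (htr 2)
  have e01 : Real.sqrt (fidelity (ρ 0) (ρ 1)) = a := hfid 0 1
  have e10 : Real.sqrt (fidelity (ρ 1) (ρ 0)) = a := by rw [hfid]; exact s10
  have e02 : Real.sqrt (fidelity (ρ 0) (ρ 2)) = b := hfid 0 2
  have e20 : Real.sqrt (fidelity (ρ 2) (ρ 0)) = b := by rw [hfid]; exact s20
  have e12 : Real.sqrt (fidelity (ρ 1) (ρ 2)) = c := hfid 1 2
  have e21 : Real.sqrt (fidelity (ρ 2) (ρ 1)) = c := by rw [hfid]; exact s21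
  constructor
  · ext i j
    simp only [Matrix.conjTranspose_apply, Matrix.of_apply, star_trivial]
    rw [hfid, hfid]
    exact rf_symm (hpsd j) (hpsd i)
  · intro x
    simp [Finsupp.sum_fintype, Fin.sum_univ_three]
    rw [e00, e11, e22, e01, e10, e02, e20, e12, e21]
    have h := quad_nonneg a b c (x 0) (x 1) (x 2) ha0 hb0 hc0 ha1 hb1 hc1 hdet
    nlinarith [h]
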